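/- Let v₀ > 0 and let u : ℝ² → ℝ² be continuously differentiable. A point (r*, θ*) ∈ ℝ² × ℝ is an equilibrium of the front-element dynamics if and only if u(r*) = −v₀ n̂(θ*) and the vector Du(r*) ĝ(θ*) is a scalar multiple of ĝ(θ*) (i.e. ĝ(θ*) is an eigenvector of the Jacobian matrix Du(r*)). In particular, at every equilibrium |u(r*)| = v₀ and u(r*) is perpendicular to ĝ(θ*). -/

import Mathlib

noncomputable section

open Real Polynomial

/-- Points in the plane, with the Euclidean norm. -/
abbrev Pt : Type := EuclideanSpace ℝ (Fin 2)

/-- Build a point of the plane from two coordinates. -/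
def vec2 (a b : ℝ) : Pt := (WithLp.equiv 2 (Fin 2 → ℝ)).symm ![a, b]

/-- Front tangent direction ĝ(θ) = (cos θ, sin θ). -/
def ghat (θ : ℝ) : Pt := vec2 (Real.cos θ) (Real.sin θ)

/-- Front normal (burning) direction n̂(θ) = (sin θ, −cos θ). -/
def nhat (θ : ℝ) : Pt := vec2 (Real.sin θ) (-(Real.cos θ))

/-- Euclidean dot product on the plane. -/
def dot (v w : Pt) : ℝ := v 0 * w 0 + v 1 * w 1

/-- The Jacobian matrix Du(r) of a planar vector field. -/
def jacOf (u : Pt → Pt) (r : Pt) : Matrix (Fin 2) (Fin 2) ℝ :=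
  fun i j => fderiv ℝ u r (EuclideanSpace.single j 1) i

/-- Action of a 2×2 matrix on a point of the plane. -/
def mulVec2 (M : Matrix (Fin 2) (Fin 2) ℝ) (v : Pt) : Pt :=
  vec2 (M 0 0 * v 0 + M 0 1 * v 1) (M 1 0 * v 0 + M 1 1 * v 1)

/-- The three-dimensional front-element vector field
    F(r, θ) = (u(r) + v₀ n̂(θ), −n̂(θ)·(Du(r) ĝ(θ))). -/
def frontField (v₀ : ℝ) (u : Pt → Pt) (q : Pt × ℝ) : Pt × ℝ :=
  (u q.1 + v₀ • nhat q.2, -(dot (nhat q.2) (mulVec2 (jacOf u q.1) (ghat q.2))))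

/-- The standard basis of ℝ² × ℝ ≃ ℝ³. -/
def basis3 : Fin 3 → Pt × ℝ :=
  ![(EuclideanSpace.single 0 1, 0), (EuclideanSpace.single 1 1, 0), ((0 : Pt), 1)]

/-- Components of a vector in ℝ² × ℝ ≃ ℝ³. -/
def comp3 (p : Pt × ℝ) : Fin 3 → ℝ := ![p.1 0, p.1 1, p.2]

/-- The 3×3 Jacobian matrix of the front-element field at a point of ℝ² × ℝ. -/
def jac3 (v₀ : ℝ) (u : Pt → Pt) (q : Pt × ℝ) : Matrix (Fin 3) (Fin 3) ℝ :=
  fun i j => comp3 (fderiv ℝ (frontField v₀ u) q (basis3 j)) i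

/-- Second partial derivative ∂ⱼ∂ₖuᵢ(r). -/
def d2 (u : Pt → Pt) (r : Pt) (i j k : Fin 2) : ℝ :=
  fderiv ℝ (fun x => fderiv ℝ u x (EuclideanSpace.single k 1) i) r (EuclideanSpace.single j 1)

/-- Divergence-free: ∂₁u₁ + ∂₂u₂ = 0 everywhere. -/
def divFree (u : Pt → Pt) : Prop := ∀ r : Pt, jacOf u r 0 0 + jacOf u r 1 1 = 0

/-- Rotation of a planar vector by +π/2. -/
def perp (v : Pt) : Pt := vec2 (-(v 1)) (v 0)

/-- The velocity field generated by a stream function: u = (∂Ψ/∂y, −∂Ψ/∂x). -/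
def uOf (Ψ : Pt → ℝ) (x : Pt) : Pt :=
  vec2 (fderiv ℝ Ψ x (EuclideanSpace.single 1 1)) (-(fderiv ℝ Ψ x (EuclideanSpace.single 0 1)))

/-- Polar angle of a point of the plane. -/
def angOf (x : Pt) : ℝ := Complex.arg ⟨x 0, x 1⟩


lemma vec2_zero (a b : ℝ) : vec2 a b 0 = a := rfl
lemma vec2_one (a b : ℝ) : vec2 a b 1 = b := rfl

lemma norm_nhat (θ : ℝ) : ‖nhat θ‖ = 1 := by
  have h : ‖nhat θ‖ = Real.sqrt (∑ i : Fin 2, ‖nhat θ i‖ ^ 2) := EuclideanSpace.norm_eq _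
  rw [h, Fin.sum_univ_two]
  show Real.sqrt (‖Real.sin θ‖ ^ 2 + ‖-(Real.cos θ)‖ ^ 2) = 1
  rw [Real.sqrt_eq_one]
  simp [sq_abs, Real.sin_sq_add_cos_sq]

lemma ortho_iff (θ : ℝ) (w : Pt) :
    dot (nhat θ) w = 0 ↔ ∃ c : ℝ, w = c • ghat θ := by
  have pyth := Real.sin_sq_add_cos_sq θ
  constructor
  · intro h
    have h' : Real.sin θ * w 0 + (-(Real.cos θ)) * w 1 = 0 := h
    refine ⟨Real.cos θ * w 0 + Real.sin θ * w 1, PiLp.ext fun i => ?_⟩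
    fin_cases i
    · show w 0 = (Real.cos θ * w 0 + Real.sin θ * w 1) * Real.cos θ
      linear_combination Real.sin θ * h' - w 0 * pyth
    · show w 1 = (Real.cos θ * w 0 + Real.sin θ * w 1) * Real.sin θ
      linear_combination -Real.cos θ * h' - w 1 * pyth
  · rintro ⟨c, rfl⟩
    show Real.sin θ * (c • ghat θ) 0 + (-(Real.cos θ)) * (c • ghat θ) 1 = 0
    show Real.sin θ * (c * Real.cos θ) + (-(Real.cos θ)) * (c * Real.sin θ) = 0
    ring


/-- (r*, θ*) is an equilibrium of the front-element dynamics iff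
u(r*) = −v₀ n̂(θ*) and Du(r*) ĝ(θ*) is a scalar multiple of ĝ(θ*); in particular,
at every equilibrium |u(r*)| = v₀ and u(r*) ⊥ ĝ(θ*). -/
theorem bfp_characterization
    (v₀ : ℝ) (hv₀ : 0 < v₀) (u : Pt → Pt) (hu : ContDiff ℝ 1 u) :
    (∀ (r : Pt) (θ : ℝ),
      frontField v₀ u (r, θ) = 0 ↔
        (u r = -(v₀ • nhat θ) ∧ ∃ c : ℝ, mulVec2 (jacOf u r) (ghat θ) = c • ghat θ)) ∧
    (∀ (r : Pt) (θ : ℝ), frontField v₀ u (r, θ) = 0 →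
      ‖u r‖ = v₀ ∧ dot (u r) (ghat θ) = 0) := by
  have key : ∀ (r : Pt) (θ : ℝ),
      frontField v₀ u (r, θ) = 0 ↔
        (u r = -(v₀ • nhat θ) ∧ ∃ c : ℝ, mulVec2 (jacOf u r) (ghat θ) = c • ghat θ) := by
    intro r θ
    rw [Prod.ext_iff]
    constructor
    · rintro ⟨h1, h2⟩
      refine ⟨eq_neg_of_add_eq_zero_left h1, (ortho_iff θ _).mp ?_⟩
      have : -(dot (nhat θ) (mulVec2 (jacOf u r) (ghat θ))) = 0 := h2
      linarith
    · rintro ⟨h1, h2⟩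
      constructor
      · show u r + v₀ • nhat θ = 0
        rw [h1]; abel
      · show -(dot (nhat θ) (mulVec2 (jacOf u r) (ghat θ))) = 0
        have := (ortho_iff θ (mulVec2 (jacOf u r) (ghat θ))).mpr h2
        linarith
  refine ⟨key, fun r θ h => ?_⟩
  obtain ⟨h1, -⟩ := (key r θ).mp h
  constructor
  · rw [h1, norm_neg, norm_smul, norm_nhat, Real.norm_eq_abs, abs_of_pos hv₀, mul_one]
  · rw [h1]
    show (-(v₀ • nhat θ)) 0 * Real.cos θ + (-(v₀ • nhat θ)) 1 * Real.sin θ = 0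
    show (-(v₀ * Real.sin θ)) * Real.cos θ + (-(v₀ * (-(Real.cos θ)))) * Real.sin θ = 0
    ring
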